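/- Let 0 < α < 1 and γ > 0, and let (f_m)_{m≥1} be defined by the stated recursion. Then for each m ∈ ℕ there exists a constant C > 0 such that for all integers j ≥ 1: |(1−α)^γ (1 + f_1 j^{−1})(1 + f_2 j^{−2}) ⋯ (1 + f_m j^{−m}) F_j − 1| ≤ C j^{−m−1}; that is, (1−α)^γ ∏_{i=1}^m (1 + f_i j^{−i}) F_j = 1 + O(j^{−m−1}) as j → ∞. -/

import Mathlib

/-- Pochhammer symbol `(γ)_l = γ(γ+1)⋯(γ+l−1)`. -/
noncomputable def poch (γ : ℝ) (l : ℕ) : ℝ := ∏ i ∈ Finset.range l, (γ + i)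

/-- `F_j(α,γ) = ∑_{l≥0} α^l (γ)_l/l! · jγ/(jγ+l)`, with the `l = 0` summand interpreted as `1`. -/
noncomputable def Fseq (α γ : ℝ) (j : ℕ) : ℝ :=
  ∑' l : ℕ, if l = 0 then 1 else
    α^l * poch γ l / (Nat.factorial l) * ((j*γ)/(j*γ + l))

/-- Stirling numbers of the second kind. -/
def stirling2 : ℕ → ℕ → ℕ
  | 0, 0 => 1
  | 0, _+1 => 0
  | _+1, 0 => 0
  | n+1, k+1 => (k+1) * stirling2 n (k+1) + stirling2 n k

/-- `t_n(α,γ) = (−1)^n γ^{−n} ∑_{i=0}^n S(n,i) (γ)_i (α/(1−α))^i`. -/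
noncomputable def tcoef (α γ : ℝ) (n : ℕ) : ℝ :=
  (-1)^n * (γ^n)⁻¹ *
    ∑ i ∈ Finset.range (n+1), (stirling2 n i : ℝ) * poch γ i * (α/(1-α))^i

/-- Sum of products `f_{l_s}⋯f_{l_1}` over strictly decreasing integer sequences
`m ≥ l_s > ⋯ > l_1 ≥ 1` with `l_1+⋯+l_s = k` (realized as subsets of `{1,…,m}` with sum `k`). -/
noncomputable def ppSum (f : ℕ → ℝ) (m k : ℕ) : ℝ :=
  ∑ S ∈ (Finset.Icc 1 m).powerset.filter (fun S => S.sum id = k), ∏ l ∈ S, f l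

open Filter Finset Topology

lemma poch_zero (γ : ℝ) : poch γ 0 = 1 := by simp [poch]

lemma poch_succ (γ : ℝ) (l : ℕ) : poch γ (l+1) = poch γ l * (γ + l) := by
  simp [poch, Finset.prod_range_succ]

lemma poch_pos {γ : ℝ} (hγ : 0 < γ) (l : ℕ) : 0 < poch γ l :=
  Finset.prod_pos (fun i _ => by positivity)

lemma poch_add (γ : ℝ) (i k : ℕ) : poch γ (i + k) = poch γ i * poch (γ + i) k := by
  simp only [poch, Finset.prod_range_add]
  congr 1
  refine Finset.prod_congr rfl fun j _ => ?_
  push_cast; ring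

/-- Master summability: `∑ poch γ l / l! * x^l * l^n` converges for `0 < x < 1`. -/
lemma summable_master {γ : ℝ} (hγ : 0 < γ) {x : ℝ} (hx0 : 0 < x) (hx1 : x < 1) (n : ℕ) :
    Summable (fun l : ℕ => poch γ l / l.factorial * x ^ l * (l : ℝ) ^ n) := by
  set b : ℕ → ℝ := fun l => poch γ l / l.factorial * x ^ l * (l : ℝ) ^ n with hb
  have hbpos : ∀ l : ℕ, 1 ≤ l → 0 < b l := by
    intro l hl
    have : (0:ℝ) < l := by exact_mod_cast hl
    have := poch_pos hγ l
    have : (0:ℝ) < l.factorial := by exact_mod_cast l.factorial_pos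
    positivity
  apply summable_of_ratio_test_tendsto_lt_one hx1
  · filter_upwards [eventually_ge_atTop 1] with l hl
    exact (hbpos l hl).ne'
  · have key : ∀ᶠ l : ℕ in atTop,
        ‖b (l+1)‖ / ‖b l‖ = x * ((γ + l)/(l+1)) * (((l:ℝ)+1)/l) ^ n := by
      filter_upwards [eventually_ge_atTop 1] with l hl
      have hl0 : (0:ℝ) < l := by exact_mod_cast hl
      have hbl := hbpos l hl
      have hbl1 := hbpos (l+1) (by omega)
      rw [Real.norm_eq_abs, Real.norm_eq_abs, abs_of_pos hbl, abs_of_pos hbl1]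
      have hfac : ((l+1).factorial : ℝ) = (l+1) * l.factorial := by
        push_cast [Nat.factorial_succ]; ring
      have hfacpos : (0:ℝ) < l.factorial := by exact_mod_cast l.factorial_pos
      rw [hb]
      simp only [poch_succ, hfac]
      push_cast
      rw [div_eq_iff hbl.ne', hb]
      field_simp
      rw [div_pow, pow_succ]
      field_simp
    have h1 : Tendsto (fun l : ℕ => (γ + (l:ℝ))/((l:ℝ)+1)) atTop (𝓝 1) := by
      have h : Tendsto (fun l : ℕ => 1 + (γ - 1)/((l:ℝ)+1)) atTop (𝓝 (1 + 0)) := by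
        apply tendsto_const_nhds.add
        apply Tendsto.div_atTop tendsto_const_nhds
        exact tendsto_atTop_add_const_right _ _ tendsto_natCast_atTop_atTop
      simp only [add_zero] at h
      refine Tendsto.congr' ?_ h
      filter_upwards [eventually_ge_atTop 1] with l hl
      have hl0 : (0:ℝ) < (l:ℝ) + 1 := by positivity
      field_simp
      ring
    have h2 : Tendsto (fun l : ℕ => (((l:ℝ)+1)/(l:ℝ))^n) atTop (𝓝 (1^n)) := by
      apply Tendsto.pow
      have h : Tendsto (fun l : ℕ => 1 + 1/(l:ℝ)) atTop (𝓝 (1 + 0)) :=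
        tendsto_const_nhds.add tendsto_one_div_atTop_nhds_zero_nat
      simp only [add_zero] at h
      refine Tendsto.congr' ?_ h
      filter_upwards [eventually_ge_atTop 1] with l hl
      have hl0 : (0:ℝ) < (l:ℝ) := by exact_mod_cast hl
      field_simp
    have h3 := (h1.const_mul x).mul h2
    simp only [mul_one, one_pow] at h3
    exact Tendsto.congr' (Filter.EventuallyEq.symm key) h3

open Filter Finset Topology

lemma summable_master' {γ : ℝ} (hγ : 0 < γ) {x : ℝ} (hx0 : 0 ≤ x) (hx1 : x < 1) (n : ℕ) :
    Summable (fun l : ℕ => poch γ l / l.factorial * x ^ l * (l : ℝ) ^ n) := by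
  rcases hx0.eq_or_lt with h | h
  · apply summable_of_ne_finset_zero (s := {0})
    intro l hl
    simp only [Finset.mem_singleton] at hl
    simp [← h, zero_pow hl]
  · exact summable_master hγ h hx1 n

lemma summable_master0 {γ : ℝ} (hγ : 0 < γ) {x : ℝ} (hx0 : 0 ≤ x) (hx1 : x < 1) :
    Summable (fun l : ℕ => poch γ l / l.factorial * x ^ l) := by
  have := summable_master' hγ hx0 hx1 0
  simpa using this

lemma summable_deriv {γ : ℝ} (hγ : 0 < γ) {x : ℝ} (hx0 : 0 ≤ x) (hx1 : x < 1) :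
    Summable (fun l : ℕ => poch γ l / l.factorial * ((l:ℝ) * x ^ (l-1))) := by
  rcases hx0.eq_or_lt with h | h
  · apply summable_of_ne_finset_zero (s := {0, 1})
    intro l hl
    simp only [Finset.mem_insert, Finset.mem_singleton] at hl
    push_neg at hl
    have : l - 1 ≠ 0 := by omega
    simp [← h, zero_pow this]
  · refine Summable.of_nonneg_of_le (fun l => ?_) (fun l => ?_)
      (((summable_master hγ h hx1 1)).mul_left (1/x))
    · have := poch_pos hγ l
      have : (0:ℝ) < l.factorial := by exact_mod_cast l.factorial_pos
      positivity
    · match l with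
      | 0 => simp
      | (k+1) =>
        apply le_of_eq
        rw [Nat.add_sub_cancel]
        have hfac : (0:ℝ) < ((k+1).factorial : ℝ) := by exact_mod_cast (k+1).factorial_pos
        field_simp
        ring

lemma hasDerivAt_g {γ : ℝ} (hγ : 0 < γ) {x : ℝ} (hx : |x| < 1) :
    HasDerivAt (fun y : ℝ => ∑' l : ℕ, poch γ l / l.factorial * y ^ l)
      (∑' l : ℕ, poch γ l / l.factorial * ((l:ℝ) * x ^ (l-1))) x := by
  set r : ℝ := (|x| + 1)/2 with hr
  have hr0 : 0 < r := by positivity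
  have hxr : |x| < r := by rw [hr]; linarith
  have hr1 : r < 1 := by rw [hr]; linarith
  apply hasDerivAt_tsum_of_isPreconnected
    (g := fun (l : ℕ) (y : ℝ) => poch γ l / l.factorial * y ^ l)
    (g' := fun (l : ℕ) (y : ℝ) => poch γ l / l.factorial * ((l:ℝ) * y ^ (l-1)))
    (u := fun l : ℕ => poch γ l / l.factorial * ((l:ℝ) * r ^ (l-1)))
    (t := Set.Ioo (-r) r) (y₀ := 0)
  · exact summable_deriv hγ hr0.le hr1
  · exact isOpen_Ioo
  · exact (convex_Ioo _ _).isPreconnected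
  · intro l y _
    exact (hasDerivAt_pow l y).const_mul (poch γ l / l.factorial)
  · intro l y hy
    have hyr : |y| ≤ r := by
      rw [abs_le]; exact ⟨hy.1.le, hy.2.le⟩
    have h1 : |y ^ (l-1)| ≤ r ^ (l-1) := by
      rw [abs_pow]
      exact pow_le_pow_left₀ (abs_nonneg _) hyr _
    have hp := (poch_pos hγ l).le
    have hf : (0:ℝ) ≤ l.factorial := by positivity
    rw [Real.norm_eq_abs, abs_mul, abs_mul]
    rw [abs_of_nonneg (by positivity : (0:ℝ) ≤ poch γ l / l.factorial),
        abs_of_nonneg (by positivity : (0:ℝ) ≤ (l:ℝ))]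
    apply mul_le_mul_of_nonneg_left _ (by positivity)
    exact mul_le_mul_of_nonneg_left h1 (by positivity)
  · exact ⟨by linarith, hr0⟩
  · apply summable_of_ne_finset_zero (s := {0})
    intro l hl
    simp only [Finset.mem_singleton] at hl
    simp [zero_pow hl]
  · exact Set.mem_Ioo.mpr (abs_lt.mp hxr)

lemma tsum_binom {γ : ℝ} (hγ : 0 < γ) {α : ℝ} (hα0 : 0 ≤ α) (hα1 : α < 1) :
    ∑' l : ℕ, poch γ l / l.factorial * α ^ l = ((1-α)^γ)⁻¹ := by
  set g : ℝ → ℝ := fun y => ∑' l : ℕ, poch γ l / l.factorial * y ^ l with hgdef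
  set h : ℝ → ℝ := fun y => (1-y)^γ * g y with hhdef
  -- derivative of h is zero on [0, α]
  have hd : ∀ x ∈ Set.Icc (0:ℝ) α, HasDerivAt h 0 x := by
    intro x hx
    have hx0 : 0 ≤ x := hx.1
    have hx1 : x < 1 := lt_of_le_of_lt hx.2 hα1
    have h1x : 0 < 1 - x := by linarith
    have hax : |x| < 1 := by rw [abs_of_nonneg hx0]; exact hx1
    set D : ℝ := ∑' l : ℕ, poch γ l / l.factorial * ((l:ℝ) * x ^ (l-1)) with hD
    have hgd : HasDerivAt g D x := hasDerivAt_g hγ hax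
    have hrp : HasDerivAt (fun y : ℝ => (1-y)^γ) (γ * (1-x)^(γ-1) * (-1)) x := by
      have hin : HasDerivAt (fun y : ℝ => 1 - y) (-1) x := by
        simpa using (hasDerivAt_id x).const_sub 1
      exact (Real.hasDerivAt_rpow_const (Or.inl h1x.ne')).comp x hin
    have hmul := hrp.mul hgd
    -- key identity : D = γ * g x + x * D
    have hS0 := summable_master0 hγ hx0 hx1
    have hS1 := summable_master' hγ hx0 hx1 1
    have hSd := summable_deriv hγ hx0 hx1
    have hgx : g x = ∑' l : ℕ, poch γ l / l.factorial * x ^ l := rfl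
    have hS1' : Summable (fun l : ℕ => (l:ℝ) * (poch γ l / l.factorial * x ^ l)) := by
      apply Summable.congr hS1
      intro l; push_cast; ring
    have hkey : (1-x) * D = γ * g x := by
      have e1 : D = ∑' l : ℕ, (γ + l) * (poch γ l / l.factorial * x ^ l) := by
        rw [hD, hSd.tsum_eq_zero_add]
        simp only [Nat.cast_zero, zero_mul, mul_zero, zero_add]
        apply tsum_congr
        intro l
        have hfac : ((l+1).factorial : ℝ) = (l+1) * l.factorial := by
          push_cast [Nat.factorial_succ]; ring
        have hfp : (0:ℝ) < l.factorial := by exact_mod_cast l.factorial_pos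
        rw [poch_succ, hfac]
        push_cast
        field_simp
      have e2 : ∑' l : ℕ, (γ + l) * (poch γ l / l.factorial * x ^ l)
          = γ * (∑' l : ℕ, poch γ l / l.factorial * x ^ l)
            + ∑' l : ℕ, (l:ℝ) * (poch γ l / l.factorial * x ^ l) := by
        rw [← tsum_mul_left, ← Summable.tsum_add (hS0.mul_left γ) hS1']
        apply tsum_congr; intro l; ring
      have e3 : x * D = ∑' l : ℕ, (l:ℝ) * (poch γ l / l.factorial * x ^ l) := by
        rw [hD, ← tsum_mul_left]
        apply tsum_congr
        intro l
        match l with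
        | 0 => simp
        | (k+1) => push_cast; rw [pow_succ]; ring_nf
      have hDeq : D = γ * g x + x * D := by
        rw [← hgx] at e2
        nth_rewrite 1 [e1]
        rw [e2, ← e3]
      linear_combination hDeq
    have hval : γ * (1-x)^(γ-1) * (-1) * g x + (1-x)^γ * D = 0 := by
      have hsplit : (1-x)^γ = (1-x)^(γ-1) * (1-x) := by
        nth_rewrite 1 [show γ = (γ-1) + 1 by ring]
        rw [Real.rpow_add h1x, Real.rpow_one]
      rw [hsplit]
      linear_combination ((1-x)^(γ-1)) * hkey
    exact hval ▸ hmul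
  have hcont : ContinuousOn h (Set.Icc 0 α) :=
    fun x hx => ((hd x hx).continuousAt).continuousWithinAt
  have hder : ∀ x ∈ Set.Ico (0:ℝ) α, HasDerivWithinAt h 0 (Set.Ici x) x :=
    fun x hx => ((hd x (Set.Ico_subset_Icc_self hx)).hasDerivWithinAt)
  have hconst := constant_of_has_deriv_right_zero hcont hder α (Set.right_mem_Icc.mpr hα0)
  have hg0 : g 0 = 1 := by
    have hg0' : g 0 = ∑' l : ℕ, poch γ l / l.factorial * (0:ℝ) ^ l := rfl
    rw [hg0', tsum_eq_single 0 (fun n hn => by simp [zero_pow hn])]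
    simp [poch_zero]
  have hh0 : h 0 = 1 := by
    have : h 0 = (1-0:ℝ)^γ * g 0 := rfl
    rw [this, hg0]
    simp
  have hha : (1 - α)^γ * g α = 1 := by
    have : h α = (1-α)^γ * g α := rfl
    rw [← this, hconst, hh0]
  have : (((1-α)^γ)⁻¹ : ℝ) = g α := inv_eq_of_mul_eq_one_right hha
  exact this.symm

open Finset

lemma stirling2_eq_zero_of_lt : ∀ {n i : ℕ}, n < i → stirling2 n i = 0 := by
  intro n
  induction n with
  | zero => intro i hi; match i, hi with | (k+1), _ => rfl
  | succ n ih =>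
    intro i hi
    match i, hi with
    | (k+1), hi =>
      have h1 : n < k + 1 := by omega
      have h2 : n < k := by omega
      show (k+1) * stirling2 n (k+1) + stirling2 n k = 0
      rw [ih h1, ih h2]; simp

lemma mul_descFactorial (l i : ℕ) :
    l * l.descFactorial i = l.descFactorial (i+1) + i * l.descFactorial i := by
  rcases lt_or_ge l i with h | h
  · rw [Nat.descFactorial_eq_zero_iff_lt.mpr h, Nat.descFactorial_eq_zero_iff_lt.mpr (by omega)]
    simp
  · rw [Nat.descFactorial_succ]
    have : l - i + i = l := Nat.sub_add_cancel h
    nlinarith [this]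

lemma pow_eq_sum_stirling (n l : ℕ) :
    l ^ n = ∑ i ∈ range (n+1), stirling2 n i * l.descFactorial i := by
  induction n with
  | zero => simp [stirling2]
  | succ n ih =>
    have step : l ^ (n+1) = ∑ i ∈ range (n+1), stirling2 n i * (l * l.descFactorial i) := by
      rw [pow_succ, ih, Finset.sum_mul]
      apply Finset.sum_congr rfl
      intro i _; ring
    have hL : ∑ i ∈ range (n+1), stirling2 n i * (l * l.descFactorial i)
        = (∑ i ∈ range (n+1), stirling2 n i * l.descFactorial (i+1))
          + ∑ i ∈ range (n+1), i * stirling2 n i * l.descFactorial i := by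
      rw [← Finset.sum_add_distrib]
      apply Finset.sum_congr rfl; intro i _
      rw [mul_descFactorial]; ring
    have hW : ∑ i ∈ range (n+1), i * stirling2 n i * l.descFactorial i
        = ∑ i ∈ range (n+1), (i+1) * stirling2 n (i+1) * l.descFactorial (i+1) := by
      rw [Finset.sum_range_succ' (fun i => i * stirling2 n i * l.descFactorial i) n,
          Finset.sum_range_succ (fun i => (i+1) * stirling2 n (i+1) * l.descFactorial (i+1)) n,
          stirling2_eq_zero_of_lt (Nat.lt_succ_self n)]
      simp
    have hR : ∑ i ∈ range (n+2), stirling2 (n+1) i * l.descFactorial i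
        = (∑ i ∈ range (n+1), stirling2 n i * l.descFactorial (i+1))
          + ∑ i ∈ range (n+1), (i+1) * stirling2 n (i+1) * l.descFactorial (i+1) := by
      rw [Finset.sum_range_succ' (fun i => stirling2 (n+1) i * l.descFactorial i) (n+1)]
      have h0 : stirling2 (n+1) 0 = 0 := rfl
      rw [h0, ← Finset.sum_add_distrib]
      simp only [Nat.zero_mul, add_zero]
      apply Finset.sum_congr rfl; intro i _
      have hrec : stirling2 (n+1) (i+1) = (i+1) * stirling2 n (i+1) + stirling2 n i := rfl
      rw [hrec]; ring
    rw [step, hL, hW, hR]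

lemma descFactorial_mul_factorial (i k : ℕ) :
    (k+i).descFactorial i * k.factorial = (k+i).factorial := by
  induction i with
  | zero => simp
  | succ i ih =>
    have : k + (i+1) = (k+i) + 1 := by omega
    rw [this, Nat.succ_descFactorial_succ, Nat.factorial_succ]
    nlinarith [ih]

lemma summable_desc {γ : ℝ} (hγ : 0 < γ) {α : ℝ} (hα0 : 0 ≤ α) (hα1 : α < 1) (i : ℕ) :
    Summable (fun l : ℕ => poch γ l / l.factorial * α ^ l * (l.descFactorial i : ℝ)) := by
  refine Summable.of_nonneg_of_le (fun l => ?_) (fun l => ?_) (summable_master' hγ hα0 hα1 i)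
  · have := poch_pos hγ l
    have : (0:ℝ) < l.factorial := by exact_mod_cast l.factorial_pos
    positivity
  · have hle : ((l.descFactorial i : ℝ)) ≤ (l:ℝ)^i := by
      exact_mod_cast Nat.descFactorial_le_pow l i
    have := poch_pos hγ l
    have h2 : (0:ℝ) < l.factorial := by exact_mod_cast l.factorial_pos
    have h3 : (0:ℝ) ≤ poch γ l / l.factorial * α ^ l := by positivity
    exact mul_le_mul_of_nonneg_left hle h3

lemma tsum_descFactorial {γ : ℝ} (hγ : 0 < γ) {α : ℝ} (hα0 : 0 ≤ α) (hα1 : α < 1) (i : ℕ) :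
    ∑' l : ℕ, poch γ l / l.factorial * α ^ l * (l.descFactorial i : ℝ)
      = poch γ i * (α/(1-α))^i * ((1-α)^γ)⁻¹ := by
  have h1α : (0:ℝ) < 1 - α := by linarith
  have hsum := summable_desc hγ hα0 hα1 i
  rw [← hsum.sum_add_tsum_nat_add i]
  have hzero : ∑ l ∈ range i, poch γ l / l.factorial * α ^ l * (l.descFactorial i : ℝ) = 0 := by
    apply Finset.sum_eq_zero
    intro l hl
    rw [Finset.mem_range] at hl
    rw [Nat.descFactorial_eq_zero_iff_lt.mpr hl]
    simp
  rw [hzero, zero_add]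
  have hpt : ∀ k : ℕ, poch γ (k+i) / (k+i).factorial * α ^ (k+i) * ((k+i).descFactorial i : ℝ)
      = (poch γ i * α^i) * (poch (γ+i) k / k.factorial * α ^ k) := by
    intro k
    have hfd : ((k+i).descFactorial i : ℝ) * k.factorial = (k+i).factorial := by
      exact_mod_cast descFactorial_mul_factorial i k
    have hpadd : poch γ (k+i) = poch γ i * poch (γ+i) k := by
      rw [show k+i = i+k by omega, poch_add]
    have hf1 : (0:ℝ) < (k+i).factorial := by exact_mod_cast (k+i).factorial_pos
    have hf2 : (0:ℝ) < k.factorial := by exact_mod_cast k.factorial_pos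
    rw [hpadd, pow_add, ← hfd]
    field_simp
  rw [tsum_congr hpt, tsum_mul_left, tsum_binom (by positivity : (0:ℝ) < γ + i) hα0 hα1]
  have hsplit : (1-α)^(γ+(i:ℝ)) = (1-α)^γ * (1-α)^(i:ℕ) := by
    rw [Real.rpow_add h1α, Real.rpow_natCast]
  rw [hsplit]
  have hb : ((1-α):ℝ)^(i:ℕ) ≠ 0 := by positivity
  have hg : ((1-α):ℝ)^γ ≠ 0 := (Real.rpow_pos_of_pos h1α γ).ne'
  rw [mul_inv, div_pow]
  ring

lemma tsum_pow {γ : ℝ} (hγ : 0 < γ) {α : ℝ} (hα0 : 0 ≤ α) (hα1 : α < 1) (n : ℕ) :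
    ∑' l : ℕ, poch γ l / l.factorial * α ^ l * (l:ℝ) ^ n
      = (∑ i ∈ range (n+1), (stirling2 n i : ℝ) * poch γ i * (α/(1-α))^i) * ((1-α)^γ)⁻¹ := by
  have hpt : ∀ l : ℕ, poch γ l / l.factorial * α ^ l * (l:ℝ) ^ n
      = ∑ i ∈ range (n+1), (stirling2 n i : ℝ)
          * (poch γ l / l.factorial * α ^ l * (l.descFactorial i : ℝ)) := by
    intro l
    have : ((l:ℝ))^n = ∑ i ∈ range (n+1), (stirling2 n i : ℝ) * (l.descFactorial i : ℝ) := by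
      exact_mod_cast congrArg (Nat.cast : ℕ → ℝ) (pow_eq_sum_stirling n l)
    rw [this, Finset.mul_sum]
    apply Finset.sum_congr rfl
    intro i _; ring
  rw [tsum_congr hpt, Summable.tsum_finsetSum (fun i _ => (summable_desc hγ hα0 hα1 i).mul_left _)]
  rw [Finset.sum_mul]
  apply Finset.sum_congr rfl
  intro i _
  rw [tsum_mul_left, tsum_descFactorial hγ hα0 hα1 i]
  ring

open Finset

lemma geom_expand (N : ℕ) {A x : ℝ} (hA : 0 < A) (hx : 0 ≤ x) :
    A/(A+x) = (∑ n ∈ range N, (-1)^n * x^n / A^n) + (-1)^N * x^N / A^N * (A/(A+x)) := by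
  have hAx : 0 < A + x := by linarith
  induction N with
  | zero => simp
  | succ N ih =>
    rw [Finset.sum_range_succ]
    nth_rewrite 1 [ih]
    rw [add_assoc]
    congr 1
    rw [pow_succ, pow_succ, pow_succ]
    field_simp
    ring

/-- The expansion of `(1-α)^γ * Fseq α γ j` with error `O(j^{-(m+1)})`. -/
lemma expansion {α γ : ℝ} (hα0 : 0 < α) (hα1 : α < 1) (hγ : 0 < γ) (m : ℕ) :
    ∃ C : ℝ, 0 < C ∧ ∀ j : ℕ, 1 ≤ j →
      |(1-α)^γ * Fseq α γ j - ∑ n ∈ range (m+1), tcoef α γ n / (j:ℝ)^n|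
        ≤ C / (j:ℝ)^(m+1) := by
  set τ : ℕ → ℝ := fun n => ∑ i ∈ range (n+1), (stirling2 n i : ℝ) * poch γ i * (α/(1-α))^i
    with hτ
  have h1α : (0:ℝ) < 1 - α := by linarith
  have hτnonneg : ∀ n, 0 ≤ τ n := by
    intro n
    apply Finset.sum_nonneg
    intro i _
    have h1 := poch_pos hγ i
    have h2 : (0:ℝ) ≤ α/(1-α) := by positivity
    positivity
  refine ⟨τ (m+1) / γ^(m+1) + 1, by
    have := div_nonneg (hτnonneg (m+1)) (pow_pos hγ (m+1)).le; linarith, ?_⟩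
  intro j hj
  have hjR : (0:ℝ) < j := by exact_mod_cast hj
  set A : ℝ := (j:ℝ) * γ with hA
  have hApos : 0 < A := by positivity
  set c : ℕ → ℝ := fun l => poch γ l / l.factorial * α ^ l with hc
  have hcpos : ∀ l, 0 < c l := by
    intro l
    have := poch_pos hγ l
    have : (0:ℝ) < l.factorial := by exact_mod_cast l.factorial_pos
    positivity
  -- rewrite Fseq
  have hF : Fseq α γ j = ∑' l : ℕ, c l * (A/(A + l)) := by
    apply tsum_congr
    intro l
    match l with
    | 0 =>
      rw [if_pos rfl, hc]
      simp [poch_zero, div_self hApos.ne']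
    | (k+1) =>
      rw [if_neg (by omega), hc, hA]
      ring
  -- summability facts
  have Sn : ∀ n : ℕ, Summable (fun l : ℕ => c l * (l:ℝ)^n) :=
    fun n => summable_master' hγ hα0.le hα1 n
  have hfrac_le : ∀ l : ℕ, A/(A + l) ≤ 1 := by
    intro l
    rw [div_le_one (by positivity)]
    simp
  have hfrac_nonneg : ∀ l : ℕ, 0 ≤ A/(A + l) := by
    intro l; positivity
  have Sfrac : Summable (fun l : ℕ => c l * (l:ℝ)^(m+1) * (A/(A + l))) := by
    refine Summable.of_nonneg_of_le (fun l => ?_) (fun l => ?_) (Sn (m+1))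
    · have := hcpos l; have := hfrac_nonneg l; positivity
    · have h1 : (0:ℝ) ≤ c l * (l:ℝ)^(m+1) := by have := hcpos l; positivity
      calc c l * (l:ℝ)^(m+1) * (A/(A + l)) ≤ c l * (l:ℝ)^(m+1) * 1 :=
            mul_le_mul_of_nonneg_left (hfrac_le l) h1
        _ = c l * (l:ℝ)^(m+1) := by ring
  -- pointwise expansion
  have hpt : ∀ l : ℕ, c l * (A/(A + l))
      = (∑ n ∈ range (m+1), ((-1)^n / A^n) * (c l * (l:ℝ)^n))
        + ((-1)^(m+1) / A^(m+1)) * (c l * (l:ℝ)^(m+1) * (A/(A + l))) := by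
    intro l
    have hcast : (0:ℝ) ≤ (l:ℝ) := Nat.cast_nonneg l
    rw [show c l * (A/(A+l)) = c l * (A/(A+l)) from rfl]
    nth_rewrite 1 [geom_expand (m+1) hApos hcast]
    rw [mul_add, Finset.mul_sum]
    congr 1
    · apply Finset.sum_congr rfl
      intro n _
      ring
    · ring
  -- split the tsum
  have hsum1 : ∀ n ∈ range (m+1), Summable (fun l : ℕ => ((-1)^n / A^n) * (c l * (l:ℝ)^n)) :=
    fun n _ => (Sn n).mul_left _
  have hsum1' : Summable (fun l : ℕ => ∑ n ∈ range (m+1), ((-1)^n / A^n) * (c l * (l:ℝ)^n)) :=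
    summable_sum hsum1
  have hsum2 : Summable (fun l : ℕ => ((-1)^(m+1) / A^(m+1)) * (c l * (l:ℝ)^(m+1) * (A/(A + l)))) :=
    Sfrac.mul_left _
  have hsplit : ∑' l : ℕ, c l * (A/(A + l))
      = (∑ n ∈ range (m+1), ((-1)^n / A^n) * ∑' l : ℕ, c l * (l:ℝ)^n)
        + ((-1)^(m+1) / A^(m+1)) * ∑' l : ℕ, (c l * (l:ℝ)^(m+1) * (A/(A + l))) := by
    rw [tsum_congr hpt, Summable.tsum_add hsum1' hsum2, Summable.tsum_finsetSum hsum1, tsum_mul_left]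
    congr 1
    apply Finset.sum_congr rfl
    intro n _
    rw [tsum_mul_left]
  -- the values of the moment sums
  have hval : ∀ n : ℕ, ∑' l : ℕ, c l * (l:ℝ)^n = τ n * ((1-α)^γ)⁻¹ :=
    fun n => tsum_pow hγ hα0.le hα1 n
  set Rs : ℝ := ∑' l : ℕ, (c l * (l:ℝ)^(m+1) * (A/(A + l))) with hRs
  have hRs0 : 0 ≤ Rs := tsum_nonneg (fun l => by have := hcpos l; have := hfrac_nonneg l; positivity)
  have hRsle : Rs ≤ τ (m+1) * ((1-α)^γ)⁻¹ := by
    rw [← hval (m+1)]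
    apply Summable.tsum_le_tsum _ Sfrac (Sn (m+1))
    intro l
    have h1 : (0:ℝ) ≤ c l * (l:ℝ)^(m+1) := by have := hcpos l; positivity
    calc c l * (l:ℝ)^(m+1) * (A/(A + l)) ≤ c l * (l:ℝ)^(m+1) * 1 :=
          mul_le_mul_of_nonneg_left (hfrac_le l) h1
      _ = c l * (l:ℝ)^(m+1) := by ring
  have hGpos : (0:ℝ) < (1-α)^γ := Real.rpow_pos_of_pos h1α γ
  -- main identity
  have hmain : (1-α)^γ * Fseq α γ j - ∑ n ∈ range (m+1), tcoef α γ n / (j:ℝ)^n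
      = (1-α)^γ * (((-1)^(m+1) / A^(m+1)) * Rs) := by
    rw [hF, hsplit, mul_add]
    have ht : (1-α)^γ * ∑ n ∈ range (m+1), ((-1)^n / A^n) * ∑' l : ℕ, c l * (l:ℝ)^n
        = ∑ n ∈ range (m+1), tcoef α γ n / (j:ℝ)^n := by
      rw [Finset.mul_sum]
      apply Finset.sum_congr rfl
      intro n _
      have htc : tcoef α γ n = (-1)^n * (γ^n)⁻¹ * τ n := rfl
      rw [hval n, htc, hA, mul_pow]
      have hjn : ((j:ℝ))^n ≠ 0 := by positivity
      have hγn : (γ:ℝ)^n ≠ 0 := by positivity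
      have hGne : ((1-α):ℝ)^γ ≠ 0 := hGpos.ne'
      field_simp
    rw [ht]
    ring
  rw [hmain]
  rw [abs_mul, abs_mul]
  rw [abs_of_pos hGpos, abs_div, abs_pow, abs_pow, abs_neg, abs_one, one_pow,
      abs_of_pos hApos, abs_of_nonneg hRs0]
  have step1 : (1-α)^γ * (1 / A^(m+1) * Rs) ≤ (1-α)^γ * (1 / A^(m+1) * (τ (m+1) * ((1-α)^γ)⁻¹)) := by
    apply mul_le_mul_of_nonneg_left _ hGpos.le
    apply mul_le_mul_of_nonneg_left hRsle (by positivity)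
  refine le_trans step1 ?_
  have hAeq : A^(m+1) = (j:ℝ)^(m+1) * γ^(m+1) := by rw [hA, mul_pow]
  rw [hAeq]
  have h1 : (1-α)^γ * (1 / ((j:ℝ)^(m+1) * γ^(m+1)) * (τ (m+1) * ((1-α)^γ)⁻¹))
      = (τ (m+1) / γ^(m+1)) / (j:ℝ)^(m+1) := by
    field_simp
  rw [h1]
  apply div_le_div_of_nonneg_right _ (by positivity)
  linarith [hτnonneg (m+1)]

open Finset

lemma tcoef_zero (α γ : ℝ) : tcoef α γ 0 = 1 := by
  have : stirling2 0 0 = 1 := rfl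
  simp [tcoef, this, poch_zero]

lemma ppSum_filter_char {m k : ℕ} (hk : k ≤ m) (S : Finset ℕ) :
    S ∈ (Finset.Icc 1 m).powerset.filter (fun S => S.sum id = k)
      ↔ (S ⊆ Finset.Icc 1 k ∧ S.sum id = k) := by
  simp only [Finset.mem_filter, Finset.mem_powerset]
  constructor
  · rintro ⟨hsub, hsum⟩
    refine ⟨fun x hx => ?_, hsum⟩
    have hx1 := hsub hx
    rw [Finset.mem_Icc] at hx1 ⊢
    refine ⟨hx1.1, ?_⟩
    calc x = id x := rfl
      _ ≤ S.sum id := Finset.single_le_sum (fun i _ => Nat.zero_le _) hx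
      _ = k := hsum
  · rintro ⟨hsub, hsum⟩
    exact ⟨hsub.trans (Finset.Icc_subset_Icc_right hk), hsum⟩

lemma ppSum_stable (f : ℕ → ℝ) {k m1 m2 : ℕ} (h1 : k ≤ m1) (h2 : k ≤ m2) :
    ppSum f m1 k = ppSum f m2 k := by
  unfold ppSum
  apply Finset.sum_congr _ (fun _ _ => rfl)
  ext S
  rw [ppSum_filter_char h1, ppSum_filter_char h2]

lemma ppSum_zero (f : ℕ → ℝ) (m : ℕ) : ppSum f m 0 = 1 := by
  unfold ppSum
  have : (Finset.Icc 1 m).powerset.filter (fun S => S.sum id = 0) = {∅} := by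
    ext S
    simp only [Finset.mem_filter, Finset.mem_powerset, Finset.mem_singleton]
    constructor
    · rintro ⟨hsub, hsum⟩
      by_contra hne
      obtain ⟨x, hx⟩ := Finset.nonempty_iff_ne_empty.mpr hne
      have hx1 : 1 ≤ x := (Finset.mem_Icc.mp (hsub hx)).1
      have : x = 0 := by simpa using (Finset.sum_eq_zero_iff.mp hsum) x hx
      omega
    · rintro rfl
      exact ⟨Finset.empty_subset _, rfl⟩
  rw [this]
  simp

lemma ppSum_succ_self (f : ℕ → ℝ) (k : ℕ) :
    ppSum f (k+1) (k+1) = f (k+1) + ppSum f k (k+1) := by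
  unfold ppSum
  have hset : (Finset.Icc 1 (k+1)).powerset.filter (fun S => S.sum id = k+1)
      = insert {k+1} ((Finset.Icc 1 k).powerset.filter (fun S => S.sum id = k+1)) := by
    ext S
    simp only [Finset.mem_filter, Finset.mem_powerset, Finset.mem_insert]
    constructor
    · rintro ⟨hsub, hsum⟩
      by_cases hmem : (k+1) ∈ S
      · left
        have herase : (k+1) + (S.erase (k+1)).sum id = S.sum id :=
          Finset.add_sum_erase S id hmem
        have hzero : (S.erase (k+1)).sum id = 0 := by omega
        have hempty : S.erase (k+1) = ∅ := by
          by_contra hne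
          obtain ⟨x, hx⟩ := Finset.nonempty_iff_ne_empty.mpr hne
          have hxS : x ∈ S := Finset.mem_of_mem_erase hx
          have hx1 : 1 ≤ x := (Finset.mem_Icc.mp (hsub hxS)).1
          have : x = 0 := by simpa using (Finset.sum_eq_zero_iff.mp hzero) x hx
          omega
        rcases (Finset.erase_eq_empty_iff S (k+1)).mp hempty with h | h
        · exact absurd (h ▸ hmem) (Finset.notMem_empty _)
        · exact h
      · right
        refine ⟨fun x hx => ?_, hsum⟩
        have hx1 := hsub hx
        rw [Finset.mem_Icc] at hx1 ⊢
        have : x ≠ k+1 := fun h => hmem (h ▸ hx)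
        omega
    · rintro (rfl | ⟨hsub, hsum⟩)
      · refine ⟨?_, by simp⟩
        simp only [Finset.singleton_subset_iff, Finset.mem_Icc]
        omega
      · exact ⟨hsub.trans (Finset.Icc_subset_Icc_right (by omega)), hsum⟩
  rw [hset, Finset.sum_insert]
  · simp
  · simp only [Finset.mem_filter, Finset.mem_powerset]
    rintro ⟨hsub, -⟩
    have := Finset.mem_Icc.mp (hsub (Finset.mem_singleton_self (k+1)))
    omega

/-- The key cancellation identity. -/
lemma key_cancel {α γ : ℝ} (f : ℕ → ℝ)
    (hf : ∀ m : ℕ, f (m+1) = -tcoef α γ (m+1)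
      - ∑ n ∈ Finset.range (m+1), tcoef α γ n * ppSum f m (m+1-n))
    (m k : ℕ) (hkm : k + 1 ≤ m) :
    ∑ n ∈ range (k+2), tcoef α γ n * ppSum f m (k+1-n) = 0 := by
  rw [Finset.sum_range_succ' (fun n => tcoef α γ n * ppSum f m (k+1-n)) (k+1)]
  -- n = 0 term
  have h0 : tcoef α γ 0 * ppSum f m (k+1-0) = f (k+1) + ppSum f k (k+1) := by
    rw [tcoef_zero, one_mul]
    have : ppSum f m (k+1) = ppSum f (k+1) (k+1) := ppSum_stable f hkm le_rfl
    rw [show k+1-0 = k+1 from rfl, this, ppSum_succ_self]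
  -- shifted sum
  have hshift : ∑ n ∈ range (k+1), tcoef α γ (n+1) * ppSum f m (k+1-(n+1))
      = ∑ n ∈ range k, tcoef α γ (n+1) * ppSum f k (k-n) + tcoef α γ (k+1) := by
    rw [Finset.sum_range_succ]
    have hlast : tcoef α γ (k+1) * ppSum f m (k+1-(k+1)) = tcoef α γ (k+1) := by
      rw [show k+1-(k+1) = 0 by omega, ppSum_zero, mul_one]
    rw [hlast]
    congr 1
    apply Finset.sum_congr rfl
    intro n hn
    rw [Finset.mem_range] at hn
    have he : k+1-(n+1) = k-n := by omega
    rw [he, ppSum_stable f (show k-n ≤ m by omega) (show k-n ≤ k by omega)]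
  -- recursion rewritten
  have hrec : f (k+1) = -tcoef α γ (k+1) - ppSum f k (k+1)
      - ∑ n ∈ range k, tcoef α γ (n+1) * ppSum f k (k-n) := by
    rw [hf k]
    rw [Finset.sum_range_succ' (fun n => tcoef α γ n * ppSum f k (k+1-n)) k]
    rw [tcoef_zero, one_mul, show k+1-0 = k+1 from rfl]
    have : ∀ n ∈ range k, tcoef α γ (n+1) * ppSum f k (k+1-(n+1))
        = tcoef α γ (n+1) * ppSum f k (k-n) := by
      intro n hn
      rw [show k+1-(n+1) = k-n by omega]
    rw [Finset.sum_congr rfl this]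
    ring
  rw [hshift, h0, hrec]
  ring

open Finset Polynomial

lemma PP_coeff (f : ℕ → ℝ) (m k : ℕ) :
    (∏ i ∈ Icc 1 m, (1 + C (f i) * X ^ i) : ℝ[X]).coeff k = ppSum f m k := by
  have hexp : (∏ i ∈ Icc 1 m, (1 + C (f i) * X ^ i) : ℝ[X])
      = ∑ t ∈ (Icc 1 m).powerset, C (∏ i ∈ t, f i) * X ^ (t.sum id) := by
    rw [show (∏ i ∈ Icc 1 m, (1 + C (f i) * X ^ i) : ℝ[X])
        = ∏ i ∈ Icc 1 m, (C (f i) * X ^ i + 1)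
      from Finset.prod_congr rfl (fun i _ => by ring)]
    rw [Finset.prod_add]
    apply Finset.sum_congr rfl
    intro t ht
    rw [Finset.prod_const_one, mul_one, Finset.prod_mul_distrib, ← map_prod,
        Finset.prod_pow_eq_pow_sum]
    rfl
  rw [hexp, Polynomial.finset_sum_coeff]
  simp_rw [Polynomial.coeff_C_mul, Polynomial.coeff_X_pow]
  unfold ppSum
  rw [Finset.sum_filter]
  have hid : ∀ t : Finset ℕ, t.sum id = ∑ x ∈ t, x := fun t => rfl
  simp only [hid]
  apply Finset.sum_congr rfl
  intro t _
  rcases eq_or_ne (∑ x ∈ t, x) k with h | h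
  · rw [if_pos h.symm, if_pos h, mul_one]
  · rw [if_neg (Ne.symm h), if_neg h, mul_zero]

lemma TT_coeff (α γ : ℝ) (m K : ℕ) :
    (∑ n ∈ range (m+1), C (tcoef α γ n) * X ^ n : ℝ[X]).coeff K
      = if K ∈ range (m+1) then tcoef α γ K else 0 := by
  rw [Polynomial.finset_sum_coeff]
  simp_rw [Polynomial.coeff_C_mul, Polynomial.coeff_X_pow]
  rw [← Finset.sum_ite_eq (range (m+1)) K (fun n => tcoef α γ n)]
  apply Finset.sum_congr rfl
  intro n _
  by_cases h : K = n
  · simp [h]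
  · simp [h]


/-- Let `0 < α < 1`, `γ > 0`, and let `(f_m)` satisfy the recursion
`f_0 = 1`, `f_{m+1} = −t_{m+1} − ∑_{n=0}^m t_n ∑ f_{l_s}⋯f_{l_1}`.
Then for each `m`, `(1−α)^γ ∏_{i=1}^m (1 + f_i j^{−i}) F_j = 1 + O(j^{−m−1})` as `j → ∞`. -/
theorem product_formula (α γ : ℝ) (hα0 : 0 < α) (hα1 : α < 1) (hγ : 0 < γ)
    (f : ℕ → ℝ) (hf0 : f 0 = 1)
    (hf : ∀ m : ℕ, f (m+1) = -tcoef α γ (m+1)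
      - ∑ n ∈ Finset.range (m+1), tcoef α γ n * ppSum f m (m+1-n)) :
    ∀ m : ℕ, ∃ C : ℝ, 0 < C ∧ ∀ j : ℕ, 1 ≤ j →
      |(1 - α) ^ γ * (∏ i ∈ Finset.Icc 1 m, (1 + f i / (j : ℝ)^i)) * Fseq α γ j - 1|
        ≤ C / (j : ℝ)^(m+1) := by
  
  intro m
  obtain ⟨C₁, hC₁pos, hC₁⟩ := expansion hα0 hα1 hγ m
  set PP : ℝ[X] := ∏ i ∈ Icc 1 m, (1 + C (f i) * X ^ i) with hPP
  set TT : ℝ[X] := ∑ n ∈ range (m+1), C (tcoef α γ n) * X ^ n with hTT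
  have hcoeffPT : ∀ K, K < m+1 → (PP * TT - 1).coeff K = 0 := by
    intro K hK
    have h1 : (PP * TT - 1).coeff K = (TT * PP).coeff K - (1 : ℝ[X]).coeff K := by
      rw [Polynomial.coeff_sub, mul_comm]
    rw [h1, Polynomial.coeff_mul, Finset.Nat.sum_antidiagonal_eq_sum_range_succ_mk]
    have h2 : ∀ i ∈ range (K+1), TT.coeff i * PP.coeff (K - i)
        = tcoef α γ i * ppSum f m (K - i) := by
      intro i hi
      rw [Finset.mem_range] at hi
      rw [hTT, hPP, TT_coeff, PP_coeff, if_pos (Finset.mem_range.mpr (by omega))]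
    rw [Finset.sum_congr rfl h2]
    match K, hK with
    | 0, _ =>
      simp [tcoef_zero, ppSum_zero]
    | (k+1), hK =>
      rw [key_cancel f hf m k (by omega)]
      rw [Polynomial.coeff_one]
      norm_num
  obtain ⟨E, hE⟩ : (X : ℝ[X])^(m+1) ∣ (PP * TT - 1) := Polynomial.X_pow_dvd_iff.mpr hcoeffPT
  set C₂ : ℝ := ∑ k ∈ range (E.natDegree+1), |E.coeff k| with hC₂
  have hC₂0 : 0 ≤ C₂ := Finset.sum_nonneg (fun k _ => abs_nonneg _)
  set B : ℝ := ∏ i ∈ Icc 1 m, (1 + |f i|) with hB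
  have hB1 : (1:ℝ) ≤ B := by
    rw [hB]
    calc (1:ℝ) = ∏ _i ∈ Icc 1 m, (1:ℝ) := by simp
      _ ≤ ∏ i ∈ Icc 1 m, (1 + |f i|) :=
          Finset.prod_le_prod (fun i _ => zero_le_one)
            (fun i _ => by have := abs_nonneg (f i); linarith)
  refine ⟨B * C₁ + C₂ + 1, by nlinarith, ?_⟩
  intro j hj
  have hjR : (1:ℝ) ≤ (j:ℝ) := by exact_mod_cast hj
  have hj0 : (0:ℝ) < j := by linarith
  set y : ℝ := ((j:ℝ))⁻¹ with hy
  have hy0 : 0 < y := by positivity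
  have hy1 : y ≤ 1 := by
    rw [hy]
    exact inv_le_one_of_one_le₀ hjR
  have hyp : ∀ i : ℕ, y ^ i = ((j:ℝ)^i)⁻¹ := fun i => by rw [hy, inv_pow]
  set T : ℝ := ∑ n ∈ range (m+1), tcoef α γ n / (j:ℝ)^n with hT
  set P : ℝ := ∏ i ∈ Icc 1 m, (1 + f i / (j:ℝ)^i) with hP
  have hPeval : PP.eval y = P := by
    rw [hPP, hP, Polynomial.eval_prod]
    apply Finset.prod_congr rfl
    intro i _
    simp only [Polynomial.eval_add, Polynomial.eval_one, Polynomial.eval_mul,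
      Polynomial.eval_C, Polynomial.eval_pow, Polynomial.eval_X]
    rw [hyp, div_eq_mul_inv]
  have hTeval : TT.eval y = T := by
    rw [hTT, hT, Polynomial.eval_finset_sum]
    apply Finset.sum_congr rfl
    intro n _
    simp only [Polynomial.eval_mul, Polynomial.eval_C, Polynomial.eval_pow, Polynomial.eval_X]
    rw [hyp, div_eq_mul_inv]
  have hPT : P * T - 1 = y^(m+1) * E.eval y := by
    have := congrArg (Polynomial.eval y) hE
    simp only [Polynomial.eval_mul, Polynomial.eval_sub, Polynomial.eval_one,
      Polynomial.eval_pow, Polynomial.eval_X] at this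
    rw [hPeval, hTeval] at this
    exact this
  have hEbound : |E.eval y| ≤ C₂ := by
    rw [Polynomial.eval_eq_sum_range, hC₂]
    refine (Finset.abs_sum_le_sum_abs _ _).trans ?_
    apply Finset.sum_le_sum
    intro k _
    rw [abs_mul, abs_pow]
    have hay : |y| ≤ 1 := by rw [abs_of_pos hy0]; exact hy1
    calc |E.coeff k| * |y|^k ≤ |E.coeff k| * 1 :=
          mul_le_mul_of_nonneg_left (pow_le_one₀ (abs_nonneg _) hay) (abs_nonneg _)
      _ = |E.coeff k| := by ring
  have hPbound : |P| ≤ B := by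
    rw [hP, hB, Finset.abs_prod]
    apply Finset.prod_le_prod (fun i _ => abs_nonneg _)
    intro i _
    calc |1 + f i / (j:ℝ)^i| ≤ |1| + |f i / (j:ℝ)^i| := abs_add_le _ _
      _ = 1 + |f i| / (j:ℝ)^i := by
          rw [abs_one, abs_div, abs_of_pos (by positivity : (0:ℝ) < (j:ℝ)^i)]
      _ ≤ 1 + |f i| := by
          have : |f i| / (j:ℝ)^i ≤ |f i| := div_le_self (abs_nonneg _) (one_le_pow₀ hjR)
          linarith
  have hkey : (1 - α) ^ γ * P * Fseq α γ j - 1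
      = P * ((1-α)^γ * Fseq α γ j - T) + (P * T - 1) := by ring
  rw [hkey]
  calc |P * ((1-α)^γ * Fseq α γ j - T) + (P * T - 1)|
      ≤ |P * ((1-α)^γ * Fseq α γ j - T)| + |P * T - 1| := abs_add_le _ _
    _ = |P| * |(1-α)^γ * Fseq α γ j - T| + |y^(m+1) * E.eval y| := by
        rw [abs_mul, hPT]
    _ ≤ B * (C₁ / (j:ℝ)^(m+1)) + y^(m+1) * C₂ := by
        apply add_le_add
        · apply mul_le_mul hPbound (hC₁ j hj) (abs_nonneg _) (by linarith)
        · rw [abs_mul, abs_pow, abs_of_pos hy0]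
          exact mul_le_mul_of_nonneg_left hEbound (by positivity)
    _ = (B * C₁ + C₂) / (j:ℝ)^(m+1) := by
        rw [hyp]
        field_simp
    _ ≤ (B * C₁ + C₂ + 1) / (j:ℝ)^(m+1) := by
        apply div_le_div_of_nonneg_right (by linarith) (by positivity)
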